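/- Let $0 < p < k$ and let $T \in U^* \otimes V^* \otimes W^*$ have minrank at most $r$. Then the Koszul flattening $F_{T,p}: \Lambda^p U^* \otimes V \to \Lambda^{p+1}U^* \otimes W^*$ satisfies $\operatorname{rk} F_{T,p} \leq \binom{k-1}{p}\big(r + \min(m, \tfrac{k-p-1}{p+1}n) + \min(n, \tfrac{p}{k-p}m)\big)$. -/

import Mathlib

open scoped BigOperators

/-- Contraction of a tensor `T ∈ U^* ⊗ V^* ⊗ W^*` against a vector in the first factor. -/
def contractT {F : Type*} [Field F] {α β γ : Type*} [Fintype α]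
    (T : α → β → γ → F) (x : α → F) : Matrix β γ F :=
  Matrix.of fun j k => ∑ i, x i * T i j k

/-- The Koszul flattening `F_{T,p} : Λ^p U^* ⊗ V → Λ^{p+1} U^* ⊗ W^*` of a tensor
`T ∈ U^* ⊗ V^* ⊗ W^*`, written in the standard bases:  rows are indexed by
`(p+1)`-subsets `J` of `Fin k` together with a `W`-index, columns by `p`-subsets `I`
together with a `V`-index, and the entry is `± T_{a,b,c}` if `I = J \ {a}` (with the
usual Koszul sign) and `0` otherwise. -/
def koszulM {F : Type*} [Field F] {k m n : ℕ} (p : ℕ) (T : Fin k → Fin m → Fin n → F) :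
    Matrix ({J : Finset (Fin k) // J.card = p + 1} × Fin n)
           ({I : Finset (Fin k) // I.card = p} × Fin m) F :=
  Matrix.of fun Jc Ib =>
    ∑ a ∈ Jc.1.1, if Ib.1.1 = Jc.1.1.erase a then
      ((-1 : F) ^ (Jc.1.1.filter (· < a)).card) * T a Ib.2 Jc.2 else 0

namespace KF

variable {F : Type*} [Field F] {k : ℕ}

/-- Koszul sign. -/
def sg (F : Type*) [Field F] {k : ℕ} (J : Finset (Fin k)) (a : Fin k) : F :=
  (-1 : F) ^ (J.filter (· < a)).card

lemma sg_mul_self (J : Finset (Fin k)) (a : Fin k) : sg F J a * sg F J a = 1 := by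
  rw [sg, ← pow_add]
  exact Even.neg_one_pow ⟨_, rfl⟩

lemma sg_ne_zero (J : Finset (Fin k)) (a : Fin k) : sg F J a ≠ 0 :=
  pow_ne_zero _ (by norm_num)

lemma sg_erase {J : Finset (Fin k)} {u v : Fin k} (hv : v ∈ J) :
    sg F (J.erase v) u = (if v < u then (-1 : F) else 1) * sg F J u := by
  unfold sg
  rw [Finset.filter_erase]
  by_cases h : v < u
  · have hvf : v ∈ J.filter (· < u) := Finset.mem_filter.2 ⟨hv, h⟩
    rw [if_pos h, Finset.card_erase_of_mem hvf]
    obtain ⟨d, hd⟩ : ∃ d, (J.filter (· < u)).card = d + 1 :=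
      ⟨_, (Nat.succ_pred_eq_of_pos (Finset.card_pos.2 ⟨v, hvf⟩)).symm⟩
    rw [hd]
    simp [pow_succ]
  · rw [if_neg h, one_mul, Finset.erase_eq_of_notMem]
    simp only [Finset.mem_filter]
    exact fun hc => h hc.2

lemma sg_swap {J : Finset (Fin k)} {u v : Fin k} (hu : u ∈ J) (hv : v ∈ J) (hne : u ≠ v) :
    sg F J u * sg F J v = -(sg F (J.erase v) u * sg F (J.erase u) v) := by
  rw [sg_erase hv, sg_erase hu]
  rcases lt_or_gt_of_ne hne with h | h
  · rw [if_neg (asymm h), if_pos h]; ring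
  · rw [if_pos h, if_neg (asymm h)]; ring

/-- The contraction (interior product) matrix `ι_x ⊗ id`. -/
def ctr (F : Type*) [Field F] {k : ℕ} (q ℓ : ℕ) (x : Fin k → F) :
    Matrix ({I : Finset (Fin k) // I.card = q} × Fin ℓ)
           ({J : Finset (Fin k) // J.card = q + 1} × Fin ℓ) F :=
  Matrix.of fun Ic Jc =>
    if Ic.2 = Jc.2 then
      ∑ a ∈ Jc.1.1, if Ic.1.1 = Jc.1.1.erase a then sg F Jc.1.1 a * x a else 0
    else 0

lemma koszulM_apply_eq {m n : ℕ} (p : ℕ) (T : Fin k → Fin m → Fin n → F)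
    (Jc : {J : Finset (Fin k) // J.card = p + 1} × Fin n)
    (Ib : {I : Finset (Fin k) // I.card = p} × Fin m) :
    koszulM p T Jc Ib =
      ∑ a ∈ Jc.1.1, if Ib.1.1 = Jc.1.1.erase a then sg F Jc.1.1 a * T a Ib.2 Jc.2 else 0 := rfl

theorem cartan (q : ℕ) {m n : ℕ} (x : Fin k → F) (T : Fin k → Fin m → Fin n → F) :
    ctr F (q+1) n x * koszulM (q+1) T + koszulM q T * ctr F q m x =
      Matrix.of (fun Jc Ib => if Jc.1 = Ib.1 then contractT T x Ib.2 Jc.2 else 0) := by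
  ext Jc Ib
  obtain ⟨⟨I, hI⟩, c⟩ := Jc
  obtain ⟨⟨I', hI'⟩, b⟩ := Ib
  have key : ∀ a a' : Fin k,
      (if a ∉ I ∧ a' ∈ insert a I ∧ I' = (insert a I).erase a'
        then sg F (insert a I) a * x a * (sg F (insert a I) a' * T a' b c) else 0)
      + (if a' ∈ I ∧ a ∈ I' ∧ I.erase a' = I'.erase a
        then sg F I a' * T a' b c * (sg F I' a * x a) else 0)
      = if a = a' ∧ I = I' then x a * T a b c else 0 := by
    intro a a'
    by_cases haa : a = a'
    · subst haa
      by_cases ha : a ∈ I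
      · by_cases hII : I = I'
        · subst hII
          rw [if_neg (fun h => h.1 ha), zero_add, if_pos ⟨ha, ha, rfl⟩, if_pos ⟨rfl, rfl⟩]
          linear_combination (T a b c * x a) * sg_mul_self (F := F) I a
        · rw [if_neg (fun h => h.1 ha), zero_add, if_neg (fun h => hII (by
            rw [← Finset.insert_erase ha, h.2.2, Finset.insert_erase h.2.1])),
            if_neg (fun h => hII h.2)]
      · by_cases hII : I = I'
        · subst hII
          rw [if_pos ⟨ha, Finset.mem_insert_self a I, (Finset.erase_insert ha).symm⟩,
            if_neg (fun h => ha h.1), add_zero, if_pos ⟨rfl, rfl⟩]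
          linear_combination (x a * T a b c) * sg_mul_self (F := F) (insert a I) a
        · rw [if_neg (fun h => hII ((h.2.2.trans (Finset.erase_insert ha)).symm)),
            if_neg (fun h => ha h.1), if_neg (fun h => hII h.2)]
          simp
    · by_cases h1 : a ∉ I ∧ a' ∈ insert a I ∧ I' = (insert a I).erase a'
      · obtain ⟨ha, ha', hI'e⟩ := h1
        have ha'I : a' ∈ I := by
          rcases Finset.mem_insert.1 ha' with h | h
          · exact absurd h.symm haa
          · exact h
        have haI' : a ∈ I' := by
          rw [hI'e]
          exact Finset.mem_erase.2 ⟨haa, Finset.mem_insert_self a I⟩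
        have heq : I.erase a' = I'.erase a := by
          rw [hI'e, Finset.erase_right_comm, Finset.erase_insert ha]
        rw [if_pos ⟨ha, ha', hI'e⟩, if_pos ⟨ha'I, haI', heq⟩, if_neg (fun h => haa h.1)]
        have hsw := sg_swap (F := F) (Finset.mem_insert_self a I) ha' haa
        have hg1 : sg F I a' = sg F ((insert a I).erase a) a' := by
          rw [Finset.erase_insert ha]
        have hg2 : sg F I' a = sg F ((insert a I).erase a') a := by rw [hI'e]
        rw [hg1, hg2]
        linear_combination (x a * T a' b c) * hsw
      · have h2 : ¬(a' ∈ I ∧ a ∈ I' ∧ I.erase a' = I'.erase a) := by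
          rintro ⟨ha', haI', heq⟩
          have ha : a ∉ I := by
            intro haI
            have : a ∈ I'.erase a := heq ▸ Finset.mem_erase.2 ⟨haa, haI⟩
            exact Finset.notMem_erase a I' this
          exact h1 ⟨ha, Finset.mem_insert_of_mem ha', by
            rw [Finset.erase_insert_of_ne haa, heq, Finset.insert_erase haI']⟩
        rw [if_neg h1, if_neg h2, if_neg (fun h => haa h.1)]
        simp
  have e1 : (ctr F (q+1) n x * koszulM (q+1) T) (⟨I, hI⟩, c) (⟨I', hI'⟩, b)
      = ∑ a : Fin k, ∑ a' : Fin k,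
        (if a ∉ I ∧ a' ∈ insert a I ∧ I' = (insert a I).erase a'
          then sg F (insert a I) a * x a * (sg F (insert a I) a' * T a' b c) else 0) := by
    rw [Matrix.mul_apply, Fintype.sum_prod_type]
    have step1 : ∀ J : {J : Finset (Fin k) // J.card = q + 1 + 1},
        (∑ c' : Fin n, ctr F (q+1) n x (⟨I, hI⟩, c) (J, c')
          * koszulM (q+1) T (J, c') (⟨I', hI'⟩, b))
        = ∑ a : Fin k, (if a ∈ J.1 then
            (if I = J.1.erase a then sg F J.1 a * x a else 0)
              * koszulM (q+1) T (J, c) (⟨I', hI'⟩, b) else 0) := by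
      intro J
      have : (∑ c' : Fin n, ctr F (q+1) n x (⟨I, hI⟩, c) (J, c')
          * koszulM (q+1) T (J, c') (⟨I', hI'⟩, b))
          = (∑ a ∈ J.1, if I = J.1.erase a then sg F J.1 a * x a else 0)
            * koszulM (q+1) T (J, c) (⟨I', hI'⟩, b) := by
        simp only [ctr, Matrix.of_apply, ite_mul, zero_mul]
        rw [Fintype.sum_ite_eq]
      rw [this, Finset.sum_mul, ← Fintype.sum_ite_mem (s := J.1)]
    rw [Finset.sum_congr rfl fun J _ => step1 J, Finset.sum_comm]
    refine Finset.sum_congr rfl fun a _ => ?_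
    by_cases ha : a ∈ I
    · rw [Finset.sum_eq_zero, Finset.sum_eq_zero]
      · intro a' _
        exact if_neg (fun h => h.1 ha)
      · intro J _
        split_ifs with haJ hIe
        · exact absurd (hIe ▸ ha) (Finset.notMem_erase a J.1)
        · exact zero_mul _
        · rfl
    · have hJ₀card : (insert a I).card = q + 1 + 1 := by
        rw [Finset.card_insert_of_notMem ha, hI]
      refine (Fintype.sum_eq_single (⟨insert a I, hJ₀card⟩ :
          {J : Finset (Fin k) // J.card = q + 1 + 1}) (fun J hJne => ?_)).trans ?_
      · split_ifs with haJ hIe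
        · exact absurd (Subtype.ext (by rw [hIe, Finset.insert_erase haJ] : J.1 = insert a I))
            hJne
        · exact zero_mul _
        · rfl
      · rw [if_pos (Finset.mem_insert_self a I),
          if_pos (show I = (insert a I).erase a by rw [Finset.erase_insert ha])]
        rw [koszulM_apply_eq, Finset.mul_sum, ← Fintype.sum_ite_mem (s := insert a I)]
        refine Finset.sum_congr rfl fun a' _ => ?_
        by_cases h1 : a' ∈ insert a I
        · by_cases h2 : I' = (insert a I).erase a'
          · rw [if_pos h1, if_pos h2, if_pos ⟨ha, h1, h2⟩]
          · rw [if_pos h1, if_neg h2, mul_zero, if_neg (fun hh => h2 hh.2.2)]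
        · rw [if_neg h1, if_neg (fun hh => h1 hh.2.1)]
  have e2main : (koszulM q T * ctr F q m x) (⟨I, hI⟩, c) (⟨I', hI'⟩, b)
      = ∑ a' : Fin k, ∑ a : Fin k,
        (if a' ∈ I ∧ a ∈ I' ∧ I.erase a' = I'.erase a
          then sg F I a' * T a' b c * (sg F I' a * x a) else 0) := by
    rw [Matrix.mul_apply, Fintype.sum_prod_type]
    have step1 : ∀ I'' : {S : Finset (Fin k) // S.card = q},
        (∑ b'' : Fin m, koszulM q T (⟨I, hI⟩, c) (I'', b'')
          * ctr F q m x (I'', b'') (⟨I', hI'⟩, b))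
        = ∑ a' : Fin k, (if a' ∈ I then
            (if I''.1 = I.erase a' then sg F I a' * T a' b c else 0)
              * (∑ a ∈ I', if I''.1 = I'.erase a then sg F I' a * x a else 0) else 0) := by
      intro I''
      have h0 : (∑ b'' : Fin m, koszulM q T (⟨I, hI⟩, c) (I'', b'')
          * ctr F q m x (I'', b'') (⟨I', hI'⟩, b))
          = (∑ a' ∈ I, if I''.1 = I.erase a' then sg F I a' * T a' b c else 0)
            * (∑ a ∈ I', if I''.1 = I'.erase a then sg F I' a * x a else 0) := by
        simp only [ctr, Matrix.of_apply, mul_ite, mul_zero]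
        rw [Fintype.sum_ite_eq']
        rfl
      rw [h0, Finset.sum_mul, ← Fintype.sum_ite_mem (s := I)]
    rw [Finset.sum_congr rfl fun I'' _ => step1 I'', Finset.sum_comm]
    refine Finset.sum_congr rfl fun a' _ => ?_
    by_cases ha' : a' ∈ I
    · have hcard : (I.erase a').card = q := by
        rw [Finset.card_erase_of_mem ha', hI, Nat.add_sub_cancel]
      refine (Fintype.sum_eq_single (⟨I.erase a', hcard⟩ :
          {S : Finset (Fin k) // S.card = q}) (fun I'' hne => ?_)).trans ?_
      · rcases eq_or_ne I''.1 (I.erase a') with h2 | h2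
        · exact absurd (Subtype.ext h2) hne
        · rw [if_pos ha', if_neg h2, zero_mul]
      · rw [if_pos ha', if_pos rfl, Finset.mul_sum, ← Fintype.sum_ite_mem (s := I')]
        refine Finset.sum_congr rfl fun a _ => ?_
        by_cases h1 : a ∈ I'
        · by_cases h2 : I.erase a' = I'.erase a
          · rw [if_pos h1, if_pos h2, if_pos ⟨ha', h1, h2⟩]
          · rw [if_pos h1, if_neg h2, mul_zero, if_neg (fun hh => h2 hh.2.2)]
        · rw [if_neg h1, if_neg (fun hh => h1 hh.2.1)]
    · rw [Finset.sum_eq_zero fun I'' _ => if_neg ha',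
        Finset.sum_eq_zero fun a _ => if_neg (fun hh => ha' hh.1)]
  have e2 : (koszulM q T * ctr F q m x) (⟨I, hI⟩, c) (⟨I', hI'⟩, b)
      = ∑ a : Fin k, ∑ a' : Fin k,
        (if a' ∈ I ∧ a ∈ I' ∧ I.erase a' = I'.erase a
          then sg F I a' * T a' b c * (sg F I' a * x a) else 0) :=
    e2main.trans Finset.sum_comm
  rw [Matrix.add_apply, e1, e2, ← Finset.sum_add_distrib]
  calc (∑ a : Fin k, ((∑ a' : Fin k,
          (if a ∉ I ∧ a' ∈ insert a I ∧ I' = (insert a I).erase a'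
            then sg F (insert a I) a * x a * (sg F (insert a I) a' * T a' b c) else 0))
        + ∑ a' : Fin k,
          (if a' ∈ I ∧ a ∈ I' ∧ I.erase a' = I'.erase a
            then sg F I a' * T a' b c * (sg F I' a * x a) else 0)))
      = ∑ a : Fin k, ∑ a' : Fin k, (if a = a' ∧ I = I' then x a * T a b c else 0) := by
        refine Finset.sum_congr rfl fun a _ => ?_
        rw [← Finset.sum_add_distrib]
        exact Finset.sum_congr rfl fun a' _ => key a a'
    _ = Matrix.of (fun (Jc : {J : Finset (Fin k) // J.card = q + 1} × Fin n)
          (Ib : {I : Finset (Fin k) // I.card = q + 1} × Fin m) =>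
          if Jc.1 = Ib.1 then contractT T x Ib.2 Jc.2 else 0) (⟨I, hI⟩, c) (⟨I', hI'⟩, b) := by
        by_cases hII : I = I' <;>
          simp [hII, contractT, Subtype.mk.injEq]

theorem ctr_ctr (q ℓ : ℕ) (x : Fin k → F) : ctr F q ℓ x * ctr F (q+1) ℓ x = 0 := by
  ext Ic Jc
  obtain ⟨⟨I'', hI''⟩, b⟩ := Ic
  obtain ⟨⟨J, hJ⟩, b'⟩ := Jc
  rw [Matrix.mul_apply, Fintype.sum_prod_type, Matrix.zero_apply]
  have step1 : ∀ I : {S : Finset (Fin k) // S.card = q + 1},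
      (∑ b₀ : Fin ℓ, ctr F q ℓ x (⟨I'', hI''⟩, b) (I, b₀)
        * ctr F (q+1) ℓ x (I, b₀) (⟨J, hJ⟩, b'))
      = (if b = b' then
          (∑ a ∈ I.1, if I'' = I.1.erase a then sg F I.1 a * x a else 0)
          * (∑ a' ∈ J, if I.1 = J.erase a' then sg F J a' * x a' else 0) else 0) := by
    intro I
    simp only [ctr, Matrix.of_apply, ite_mul, zero_mul]
    rw [Fintype.sum_ite_eq, mul_ite, mul_zero]
  rw [Finset.sum_congr rfl fun I _ => step1 I]
  by_cases hbb : b = b'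
  swap
  · simp [hbb]
  simp only [if_pos hbb]
  have hsymm : ∀ u v : Fin k,
      (u ∈ J ∧ v ∈ J.erase u ∧ I'' = (J.erase u).erase v) →
      (v ∈ J ∧ u ∈ J.erase v ∧ I'' = (J.erase v).erase u) := by
    rintro u v ⟨h1, h2, h3⟩
    exact ⟨Finset.mem_of_mem_erase h2,
      Finset.mem_erase.2 ⟨fun he => (Finset.mem_erase.1 h2).1 he.symm, h1⟩,
      by rw [h3, Finset.erase_right_comm]⟩
  have main : (∑ I : {S : Finset (Fin k) // S.card = q + 1},
      (∑ a ∈ I.1, if I'' = I.1.erase a then sg F I.1 a * x a else 0)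
        * (∑ a' ∈ J, if I.1 = J.erase a' then sg F J a' * x a' else 0))
      = ∑ a' : Fin k, ∑ a : Fin k,
        (if a' ∈ J ∧ a ∈ J.erase a' ∧ I'' = (J.erase a').erase a
          then (sg F (J.erase a') a * x a) * (sg F J a' * x a') else 0) := by
    have stepA : ∀ I : {S : Finset (Fin k) // S.card = q + 1},
        (∑ a ∈ I.1, if I'' = I.1.erase a then sg F I.1 a * x a else 0)
          * (∑ a' ∈ J, if I.1 = J.erase a' then sg F J a' * x a' else 0)
        = ∑ a' : Fin k, if a' ∈ J then
            (∑ a ∈ I.1, if I'' = I.1.erase a then sg F I.1 a * x a else 0)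
              * (if I.1 = J.erase a' then sg F J a' * x a' else 0) else 0 := fun I => by
      rw [Finset.mul_sum, ← Fintype.sum_ite_mem (s := J)]
    rw [Finset.sum_congr rfl fun I _ => stepA I, Finset.sum_comm]
    refine Finset.sum_congr rfl fun a' _ => ?_
    by_cases ha' : a' ∈ J
    · have hcard : (J.erase a').card = q + 1 := by
        rw [Finset.card_erase_of_mem ha', hJ, Nat.add_sub_cancel]
      refine (Fintype.sum_eq_single (⟨J.erase a', hcard⟩ :
          {S : Finset (Fin k) // S.card = q + 1}) (fun I hne => ?_)).trans ?_
      · rcases eq_or_ne I.1 (J.erase a') with h2 | h2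
        · exact absurd (Subtype.ext h2) hne
        · rw [if_pos ha', if_neg h2, mul_zero]
      · rw [if_pos ha', if_pos rfl, Finset.sum_mul, ← Fintype.sum_ite_mem (s := J.erase a')]
        refine Finset.sum_congr rfl fun a _ => ?_
        by_cases h1 : a ∈ J.erase a'
        · by_cases h2 : I'' = (J.erase a').erase a
          · rw [if_pos h1, if_pos h2, if_pos ⟨ha', h1, h2⟩]
          · rw [if_pos h1, if_neg h2, zero_mul, if_neg fun hh => h2 hh.2.2]
        · rw [if_neg h1, if_neg fun hh => h1 hh.2.1]
    · rw [Finset.sum_eq_zero fun I _ => if_neg ha',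
        Finset.sum_eq_zero fun a _ => if_neg fun hh => ha' hh.1]
  rw [main]
  have final : (∑ z : Fin k × Fin k,
      (if z.1 ∈ J ∧ z.2 ∈ J.erase z.1 ∧ I'' = (J.erase z.1).erase z.2
        then sg F (J.erase z.1) z.2 * x z.2 * (sg F J z.1 * x z.1) else 0)) = 0 := by
    refine Finset.sum_ninvolution Prod.swap (fun z => ?_) (fun z hz hsw => hz ?_)
      (fun z => Finset.mem_univ _) (fun z => Prod.swap_swap z)
    · obtain ⟨a', a⟩ := z
      show (if a' ∈ J ∧ a ∈ J.erase a' ∧ I'' = (J.erase a').erase a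
          then sg F (J.erase a') a * x a * (sg F J a' * x a') else 0)
        + (if a ∈ J ∧ a' ∈ J.erase a ∧ I'' = (J.erase a).erase a'
          then sg F (J.erase a) a' * x a' * (sg F J a * x a) else 0) = 0
      by_cases hc : a' ∈ J ∧ a ∈ J.erase a' ∧ I'' = (J.erase a').erase a
      · obtain ⟨h1, h2, h3⟩ := hc
        have haJ : a ∈ J := Finset.mem_of_mem_erase h2
        have hane : a ≠ a' := (Finset.mem_erase.1 h2).1
        rw [if_pos ⟨h1, h2, h3⟩, if_pos (hsymm a' a ⟨h1, h2, h3⟩)]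
        rw [sg_erase (F := F) h1 (u := a), sg_erase (F := F) haJ (u := a')]
        rcases lt_or_gt_of_ne hane with h | h
        · rw [if_neg (asymm h), if_pos h]; ring
        · rw [if_pos h, if_neg (asymm h)]; ring
      · rw [if_neg hc, if_neg (fun hh => hc (hsymm a a' hh)), add_zero]
    · obtain ⟨a', a⟩ := z
      have : a' = a := congrArg Prod.snd hsw
      subst this
      exact if_neg (fun hh => (Finset.mem_erase.1 hh.2.1).1 rfl)
  exact (Fintype.sum_prod_type _).symm.trans final

lemma ctr_inj {q ℓ : ℕ} {x : Fin k → F} {i0 : Fin k} (hx : x i0 ≠ 0)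
    (u : {J : Finset (Fin k) // J.card = q + 1} × Fin ℓ → F)
    (hsupp : ∀ Jb : {J : Finset (Fin k) // J.card = q + 1} × Fin ℓ, i0 ∉ Jb.1.1 → u Jb = 0)
    (hker : (ctr F q ℓ x).mulVec u = 0) : u = 0 := by
  funext Jb
  obtain ⟨⟨J, hJ⟩, b⟩ := Jb
  by_cases hiJ : i0 ∈ J
  swap
  · exact hsupp _ hiJ
  have hcard : (J.erase i0).card = q := by
    rw [Finset.card_erase_of_mem hiJ, hJ, Nat.add_sub_cancel]
  have h0 : (∑ z : {J' : Finset (Fin k) // J'.card = q + 1} × Fin ℓ,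
      ctr F q ℓ x (⟨J.erase i0, hcard⟩, b) z * u z) = 0 := congrFun hker (⟨J.erase i0, hcard⟩, b)
  rw [Fintype.sum_eq_single (⟨⟨J, hJ⟩, b⟩ :
      {J' : Finset (Fin k) // J'.card = q + 1} × Fin ℓ)] at h0
  · have hval : ctr F q ℓ x (⟨J.erase i0, hcard⟩, b) (⟨J, hJ⟩, b) = sg F J i0 * x i0 := by
      show (if b = b then ∑ a ∈ J, if J.erase i0 = J.erase a then sg F J a * x a else 0
        else 0) = sg F J i0 * x i0
      rw [if_pos rfl, Finset.sum_eq_single_of_mem i0 hiJ, if_pos rfl]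
      intro a haJ hane
      refine if_neg fun h => ?_
      have : i0 ∈ J.erase a := Finset.mem_erase.2 ⟨fun hh => hane hh.symm, hiJ⟩
      rw [← h] at this
      exact Finset.notMem_erase i0 J this
    rw [hval] at h0
    rcases mul_eq_zero.1 h0 with h | h
    · exact absurd h (mul_ne_zero (sg_ne_zero _ _) hx)
    · exact h
  · rintro ⟨⟨J', hJ'⟩, b'⟩ hzne
    by_cases hbb : b = b'
    swap
    · rw [show ctr F q ℓ x (⟨J.erase i0, hcard⟩, b) (⟨J', hJ'⟩, b') = 0 from if_neg hbb,
        zero_mul]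
    subst hbb
    by_cases hiJ' : i0 ∈ J'
    swap
    · rw [hsupp _ hiJ', mul_zero]
    have hJne : J' ≠ J := fun h => hzne (by rw [Prod.ext_iff]; exact ⟨Subtype.ext h, rfl⟩)
    have : ctr F q ℓ x (⟨J.erase i0, hcard⟩, b) (⟨J', hJ'⟩, b) = 0 := by
      show (if b = b then ∑ a ∈ J', if J.erase i0 = J'.erase a then sg F J' a * x a else 0
        else 0) = 0
      rw [if_pos rfl]
      refine Finset.sum_eq_zero fun a haJ' => if_neg fun h => ?_
      by_cases hai : a = i0
      · subst hai
        exact hJne (by rw [← Finset.insert_erase hiJ', ← h, Finset.insert_erase hiJ])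
      · have : i0 ∈ J'.erase a := Finset.mem_erase.2 ⟨fun hh => hai hh.symm, hiJ'⟩
        rw [← h] at this
        exact Finset.notMem_erase i0 J this
    rw [this, zero_mul]

/-- Submodule of vectors supported on indices satisfying `P`. -/
def suppSub (F : Type*) [Field F] {ι : Type*} (P : ι → Prop) : Submodule F (ι → F) where
  carrier := {u | ∀ i, ¬ P i → u i = 0}
  add_mem' := fun ha hb i hi => by simp only [Pi.add_apply, ha i hi, hb i hi, add_zero]
  zero_mem' := fun i _ => rfl
  smul_mem' := fun c u hu i hi => by simp only [Pi.smul_apply, hu i hi, smul_zero]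

lemma mem_suppSub {ι : Type*} {P : ι → Prop} {u : ι → F} :
    u ∈ suppSub F P ↔ ∀ i, ¬ P i → u i = 0 := Iff.rfl

noncomputable def suppEquiv (F : Type*) [Field F] {ι : Type*} (P : ι → Prop)
    [DecidablePred P] : suppSub F P ≃ₗ[F] ({i // P i} → F) where
  toFun u := fun j => u.1 j.1
  map_add' u v := rfl
  map_smul' c u := rfl
  invFun v := ⟨fun i => if h : P i then v ⟨i, h⟩ else 0, fun i hi => dif_neg hi⟩
  left_inv := fun u => Subtype.ext (funext fun i => by
    by_cases h : P i
    · exact dif_pos h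
    · exact (dif_neg h).trans (u.2 i h).symm)
  right_inv := fun v => funext fun j => by
    have : ∃ h : P j.1, (⟨j.1, h⟩ : {i // P i}) = j := ⟨j.2, rfl⟩
    obtain ⟨h, hh⟩ := this
    simp [dif_pos h, hh]

lemma finrank_suppSub {ι : Type*} [Fintype ι] (P : ι → Prop) [DecidablePred P] :
    Module.finrank F (suppSub F P) = Fintype.card {i // P i} := by
  classical
  rw [(suppEquiv F P).finrank_eq, Module.finrank_pi]

def prodSubtypeFstEquiv {α β : Type*} (P : α → Prop) :
    {p : α × β // P p.1} ≃ {a // P a} × β where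
  toFun p := (⟨p.1.1, p.2⟩, p.1.2)
  invFun q := ⟨(q.1.1, q.2), q.1.2⟩
  left_inv := fun ⟨⟨a, b⟩, h⟩ => rfl
  right_inv := fun ⟨⟨a, h⟩, b⟩ => rfl

def ssEquiv {α : Type*} (P Q : α → Prop) :
    {x : {a // P a} // Q x.1} ≃ {a // P a ∧ Q a} where
  toFun x := ⟨x.1.1, x.1.2, x.2⟩
  invFun x := ⟨⟨x.1, x.2.1⟩, x.2.2⟩
  left_inv := fun ⟨⟨a, h1⟩, h2⟩ => rfl
  right_inv := fun ⟨a, h1, h2⟩ => rfl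

lemma card_flat_mem (q : ℕ) (i0 : Fin k) :
    Fintype.card {J : Finset (Fin k) // J.card = q + 1 ∧ i0 ∈ J} = (k-1).choose q := by
  classical
  rw [Fintype.card_subtype]
  have hb : (Finset.univ.filter fun J : Finset (Fin k) => J.card = q + 1 ∧ i0 ∈ J).card
      = ((Finset.univ.erase i0).powersetCard q).card := by
    refine Finset.card_bij' (fun J _ => J.erase i0) (fun S _ => insert i0 S) ?_ ?_ ?_ ?_
    · intro J hJ
      simp only [Finset.mem_filter, Finset.mem_univ, true_and] at hJ
      rw [Finset.mem_powersetCard]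
      exact ⟨fun a ha => Finset.mem_erase.2 ⟨(Finset.mem_erase.1 ha).1, Finset.mem_univ _⟩,
        by rw [Finset.card_erase_of_mem hJ.2, hJ.1, Nat.add_sub_cancel]⟩
    · intro S hS
      rw [Finset.mem_powersetCard] at hS
      simp only [Finset.mem_filter, Finset.mem_univ, true_and]
      have hi0S : i0 ∉ S := fun h => (Finset.mem_erase.1 (hS.1 h)).1 rfl
      exact ⟨by rw [Finset.card_insert_of_notMem hi0S, hS.2], Finset.mem_insert_self _ _⟩
    · intro J hJ
      simp only [Finset.mem_filter, Finset.mem_univ, true_and] at hJ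
      exact Finset.insert_erase hJ.2
    · intro S hS
      rw [Finset.mem_powersetCard] at hS
      have hi0S : i0 ∉ S := fun h => (Finset.mem_erase.1 (hS.1 h)).1 rfl
      exact Finset.erase_insert hi0S
  rw [hb, Finset.card_powersetCard, Finset.card_erase_of_mem (Finset.mem_univ _),
    Finset.card_univ, Fintype.card_fin]

lemma card_P (q ℓ : ℕ) (i0 : Fin k) :
    Fintype.card {p : {J : Finset (Fin k) // J.card = q + 1} × Fin ℓ // i0 ∈ p.1.1}
      = (k-1).choose q * ℓ := by
  have e : {p : {J : Finset (Fin k) // J.card = q + 1} × Fin ℓ // i0 ∈ p.1.1}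
      ≃ {J : Finset (Fin k) // J.card = q + 1 ∧ i0 ∈ J} × Fin ℓ :=
    (prodSubtypeFstEquiv (fun J : {J : Finset (Fin k) // J.card = q + 1} => i0 ∈ J.1)).trans
      (Equiv.prodCongr (ssEquiv (fun J : Finset (Fin k) => J.card = q + 1) (fun J => i0 ∈ J)) (Equiv.refl _))
  rw [Fintype.card_congr e, Fintype.card_prod, Fintype.card_fin, card_flat_mem]

lemma card_SS (q : ℕ) :
    Fintype.card {J : Finset (Fin k) // J.card = q} = k.choose q := by
  rw [Fintype.card_finset_len, Fintype.card_fin]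

lemma matrix_rank_add_le {ρ γ : Type*} [Fintype ρ] [Fintype γ] (A B : Matrix ρ γ F) :
    (A + B).rank ≤ A.rank + B.rank := by
  have hle : LinearMap.range (A + B).mulVecLin
      ≤ LinearMap.range A.mulVecLin ⊔ LinearMap.range B.mulVecLin := by
    rintro w ⟨v, rfl⟩
    rw [Matrix.mulVecLin_add]
    exact Submodule.mem_sup.2 ⟨_, ⟨v, rfl⟩, _, ⟨v, rfl⟩, rfl⟩
  exact (Submodule.finrank_mono hle).trans
    (Submodule.finrank_add_le_finrank_add_finrank _ _)

lemma matrix_rank_sum_le {ι ρ γ : Type*} [Fintype ρ] [Fintype γ] (s : Finset ι)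
    (f : ι → Matrix ρ γ F) : (∑ i ∈ s, f i).rank ≤ ∑ i ∈ s, (f i).rank := by
  classical
  induction s using Finset.induction_on with
  | empty => simp [Matrix.rank_zero]
  | insert _ _ hx ih =>
    rw [Finset.sum_insert hx, Finset.sum_insert hx]
    exact (matrix_rank_add_le _ _).trans (by omega)

lemma rank_le_sum_rowblocks {ρ β γ : Type*} [Fintype ρ] [Fintype β] [Fintype γ]
    [DecidableEq ρ] [DecidableEq β] (M : Matrix (ρ × β) γ F) :
    M.rank ≤ ∑ a : ρ, (M.submatrix (fun b => (a, b)) id).rank := by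
  have hM : M = ∑ a : ρ, (Matrix.of fun (rb : ρ × β) (b' : β) =>
      if rb = (a, b') then (1 : F) else 0) * M.submatrix (fun b => (a, b)) id := by
    ext ⟨r, b⟩ c
    rw [Matrix.sum_apply]
    have hterm : ∀ a : ρ, ((Matrix.of fun (rb : ρ × β) (b' : β) =>
        if rb = (a, b') then (1 : F) else 0) * M.submatrix (fun b => (a, b)) id) (r, b) c
        = if r = a then M (a, b) c else 0 := by
      intro a
      rw [Matrix.mul_apply]
      have : ∀ b' : β, (Matrix.of fun (rb : ρ × β) (b' : β) =>
          if rb = (a, b') then (1 : F) else 0) (r, b) b'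
            * (M.submatrix (fun b => (a, b)) id) b' c
          = if b = b' then (if r = a then M (a, b') c else 0) else 0 := by
        intro b'
        show (if (r, b) = (a, b') then (1:F) else 0) * M (a, b') c = _
        by_cases h1 : b = b' <;> by_cases h2 : r = a <;>
          simp [Prod.ext_iff, h1, h2]
      rw [Finset.sum_congr rfl fun b' _ => this b', Fintype.sum_ite_eq]
    rw [Finset.sum_congr rfl fun a _ => hterm a, Fintype.sum_ite_eq]
  calc M.rank = (∑ a : ρ, (Matrix.of fun (rb : ρ × β) (b' : β) =>
        if rb = (a, b') then (1 : F) else 0) * M.submatrix (fun b => (a, b)) id).rank := by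
        rw [← hM]
    _ ≤ ∑ a : ρ, ((Matrix.of fun (rb : ρ × β) (b' : β) =>
        if rb = (a, b') then (1 : F) else 0) * M.submatrix (fun b => (a, b)) id).rank :=
        matrix_rank_sum_le _ _
    _ ≤ ∑ a : ρ, (M.submatrix (fun b => (a, b)) id).rank :=
        Finset.sum_le_sum fun a _ => Matrix.rank_mul_le_right _ _

lemma koszulM_entry_zero {m n : ℕ} {i0 : Fin k} (p : ℕ) (T : Fin k → Fin m → Fin n → F)
    (Jc : {J : Finset (Fin k) // J.card = p + 1} × Fin n)
    (Ib : {I : Finset (Fin k) // I.card = p} × Fin m)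
    (hI : i0 ∈ Ib.1.1) (hJ : i0 ∉ Jc.1.1) : koszulM p T Jc Ib = 0 :=
  Finset.sum_eq_zero fun a _ => if_neg fun h =>
    hJ (Finset.mem_of_mem_erase (h ▸ hI))

lemma koszulM_add {m n : ℕ} (p : ℕ) (T T' : Fin k → Fin m → Fin n → F) :
    koszulM p (fun a b c => T a b c + T' a b c) = koszulM p T + koszulM p T' := by
  ext Jc Ib
  rw [Matrix.add_apply, koszulM_apply_eq (F := F), koszulM_apply_eq (F := F),
    koszulM_apply_eq (F := F), ← Finset.sum_add_distrib]
  refine Finset.sum_congr rfl fun a _ => ?_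
  by_cases h : Ib.1.1 = Jc.1.1.erase a <;> simp [h, mul_add]

lemma matrix_rank_smul_le {ρ γ : Type*} [Fintype ρ] [Fintype γ] (c : F) (M : Matrix ρ γ F) :
    (c • M).rank ≤ M.rank := by
  have hle : LinearMap.range (c • M).mulVecLin ≤ LinearMap.range M.mulVecLin := by
    rintro w ⟨v, rfl⟩
    refine ⟨c • v, ?_⟩
    rw [Matrix.mulVecLin_apply, Matrix.mulVecLin_apply, Matrix.mulVec_smul,
      Matrix.smul_mulVec]
  exact Submodule.finrank_mono hle

lemma rank_ctr_ge (q ℓ : ℕ) {x : Fin k → F} {i0 : Fin k} (hx : x i0 ≠ 0) :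
    (k-1).choose q * ℓ ≤ (ctr F q ℓ x).rank := by
  classical
  set S₂ := suppSub F (fun Jb : {J : Finset (Fin k) // J.card = q + 1} × Fin ℓ => i0 ∈ Jb.1.1)
    with hS₂
  have hinj : Function.Injective ((ctr F q ℓ x).mulVecLin.comp S₂.subtype) := by
    rw [← LinearMap.ker_eq_bot, Submodule.eq_bot_iff]
    intro u hu
    rw [LinearMap.mem_ker, LinearMap.comp_apply] at hu
    have hu0 := ctr_inj hx u.1 u.2 (by rw [← Matrix.mulVecLin_apply]; exact hu)
    exact Subtype.ext hu0
  have h1 : Module.finrank F S₂ = (k-1).choose q * ℓ := by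
    rw [hS₂, finrank_suppSub, card_P]
  have h2 := LinearMap.finrank_range_of_inj hinj
  have h3 : Module.finrank F
      (LinearMap.range ((ctr F q ℓ x).mulVecLin.comp S₂.subtype))
      ≤ (ctr F q ℓ x).rank :=
    Submodule.finrank_mono (LinearMap.range_comp_le_range _ _)
  omega

lemma rank_ctr_le (q ℓ : ℕ) {x : Fin k → F} {i0 : Fin k} (hx : x i0 ≠ 0) (hk : 0 < k) :
    (ctr F q ℓ x).rank ≤ (k-1).choose q * ℓ := by
  cases q with
  | zero =>
      refine (Matrix.rank_le_card_height _).trans ?_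
      rw [Fintype.card_prod, card_SS, Fintype.card_fin]
      simp
  | succ q =>
      have hcomp : (ctr F q ℓ x).mulVecLin.comp (ctr F (q+1) ℓ x).mulVecLin = 0 := by
        rw [← Matrix.mulVecLin_mul, ctr_ctr, Matrix.mulVecLin_zero]
      have hle : LinearMap.range (ctr F (q+1) ℓ x).mulVecLin
          ≤ LinearMap.ker (ctr F q ℓ x).mulVecLin := LinearMap.range_le_ker_iff.2 hcomp
      have h1 : (ctr F (q+1) ℓ x).rank
          ≤ Module.finrank F (LinearMap.ker (ctr F q ℓ x).mulVecLin) :=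
        Submodule.finrank_mono hle
      have h2 := LinearMap.finrank_range_add_finrank_ker (ctr F q ℓ x).mulVecLin
      have h3 : Module.finrank F ({J : Finset (Fin k) // J.card = q + 1} × Fin ℓ → F)
          = k.choose (q+1) * ℓ := by
        rw [Module.finrank_pi, Fintype.card_prod, card_SS, Fintype.card_fin]
      have h4 := rank_ctr_ge (F := F) q ℓ hx
      have hk1 : k - 1 + 1 = k := Nat.succ_pred_eq_of_pos hk
      have h5 : k.choose (q+1) * ℓ = (k-1).choose q * ℓ + (k-1).choose (q+1) * ℓ := by
        have hps : k.choose (q+1) = (k-1).choose q + (k-1).choose (q+1) := by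
          rw [← hk1]; exact Nat.choose_succ_succ (k-1) q
        rw [hps, add_mul]
      rw [Matrix.rank] at h1 h4 ⊢
      omega

end KF


open KF

/-- If `T` (with `dim U = k`, `dim V = m`, `dim W = n`) has minrank at most `r`
and `0 < p < k`, then
`rk F_{T,p} ≤ C(k-1,p) · (r + min(m, (k-p-1)n/(p+1)) + min(n, p·m/(k-p)))`. -/
theorem stmt10 {F : Type*} [Field F] {k m n : ℕ} (p r : ℕ) (hp : 0 < p) (hpk : p < k)
    (T : Fin k → Fin m → Fin n → F)
    (hT : ∃ x : Fin k → F, x ≠ 0 ∧ (contractT T x).rank ≤ r) :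
    ((koszulM p T).rank : ℚ) ≤ (Nat.choose (k - 1) p : ℚ) *
      ((r : ℚ) + min (m : ℚ) (((k : ℚ) - p - 1) * n / ((p : ℚ) + 1))
        + min (n : ℚ) ((p : ℚ) * m / ((k : ℚ) - p))) := by
  classical
  obtain ⟨p₀, rfl⟩ : ∃ p₀, p = p₀ + 1 := ⟨p - 1, (Nat.succ_pred_eq_of_pos hp).symm⟩
  obtain ⟨x₀, hx₀ne, hx₀r⟩ := hT
  obtain ⟨i0, hi0⟩ : ∃ i0, x₀ i0 ≠ 0 := Function.ne_iff.1 hx₀ne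
  set x : Fin k → F := (x₀ i0)⁻¹ • x₀ with hxdef
  have hxi0 : x i0 = 1 := by
    simp [hxdef, inv_mul_cancel₀ hi0]
  have hxi0ne : x i0 ≠ 0 := by rw [hxi0]; exact one_ne_zero
  have hk0 : 0 < k := lt_trans hp hpk
  have hcon : (contractT T x).rank ≤ r := by
    have hsc : contractT T x = (x₀ i0)⁻¹ • contractT T x₀ := by
      ext bb cc
      simp [contractT, hxdef, Finset.mul_sum, mul_assoc]
    rw [hsc]
    exact (matrix_rank_smul_le _ _).trans hx₀r
  set A := contractT T x with hA
  set T1 : Fin k → Fin m → Fin n → F := fun a bb cc => if a = i0 then A bb cc else 0 with hT1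
  set T2 : Fin k → Fin m → Fin n → F := fun a bb cc => T a bb cc - T1 a bb cc with hT2
  have hsplit : koszulM (p₀+1) T = koszulM (p₀+1) T1 + koszulM (p₀+1) T2 := by
    have hT12 : T = fun a bb cc => T1 a bb cc + T2 a bb cc := by
      funext a bb cc
      simp [hT2]
    calc koszulM (p₀+1) T
        = koszulM (p₀+1) (fun a bb cc => T1 a bb cc + T2 a bb cc) := by rw [← hT12]
      _ = _ := koszulM_add _ _ _
  -- ## bound for the rank of `koszulM T1`
  have hM1 : (koszulM (p₀+1) T1).rank ≤ (k-1).choose (p₀+1) * r := by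
    refine (rank_le_sum_rowblocks _).trans ?_
    have hblk : ∀ J : {J : Finset (Fin k) // J.card = p₀ + 1 + 1},
        ((koszulM (p₀+1) T1).submatrix (fun cc => (J, cc)) id).rank
          ≤ if i0 ∈ J.1 then r else 0 := by
      intro J
      by_cases hiJ : i0 ∈ J.1
      · rw [if_pos hiJ]
        have hfac : (koszulM (p₀+1) T1).submatrix (fun cc => (J, cc)) id
            = A.transpose * (Matrix.of fun (bb : Fin m)
                (Ib : {I : Finset (Fin k) // I.card = p₀ + 1} × Fin m) =>
                if Ib.1.1 = J.1.erase i0 ∧ Ib.2 = bb then sg F J.1 i0 else 0) := by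
          ext cc Ib
          rw [Matrix.mul_apply]
          show koszulM (p₀+1) T1 (J, cc) Ib = _
          rw [koszulM_apply_eq (F := F),
            Finset.sum_eq_single_of_mem i0 hiJ (fun a haJ hane => ?_)]
          · by_cases hcond : Ib.1.1 = J.1.erase i0
            · rw [if_pos hcond]
              have hterm : ∀ bb : Fin m, A.transpose cc bb * (Matrix.of fun (bb : Fin m)
                  (Ib : {I : Finset (Fin k) // I.card = p₀ + 1} × Fin m) =>
                  if Ib.1.1 = J.1.erase i0 ∧ Ib.2 = bb then sg F J.1 i0 else 0) bb Ib
                  = if Ib.2 = bb then A bb cc * sg F J.1 i0 else 0 := by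
                intro bb
                by_cases hbb : Ib.2 = bb <;>
                  simp [Matrix.transpose_apply, hcond, hbb]
              rw [Finset.sum_congr rfl fun bb _ => hterm bb, Fintype.sum_ite_eq]
              show sg F J.1 i0 * T1 i0 Ib.2 cc = A Ib.2 cc * sg F J.1 i0
              rw [hT1]
              simp [mul_comm]
            · rw [if_neg hcond]
              symm
              refine Finset.sum_eq_zero fun bb _ => ?_
              simp [hcond]
          · by_cases hc : Ib.1.1 = J.1.erase a
            · rw [if_pos hc, hT1]
              simp [hane]
            · rw [if_neg hc]
        rw [hfac]
        exact (Matrix.rank_mul_le_left _ _).trans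
          (le_trans (le_of_eq (Matrix.rank_transpose _)) hcon)
      · rw [if_neg hiJ]
        have hz : (koszulM (p₀+1) T1).submatrix (fun cc => (J, cc)) id = 0 := by
          ext cc Ib
          show koszulM (p₀+1) T1 (J, cc) Ib = 0
          rw [koszulM_apply_eq (F := F)]
          refine Finset.sum_eq_zero fun a haJ => ?_
          have hane : a ≠ i0 := fun h => hiJ (h ▸ haJ)
          by_cases hc : Ib.1.1 = J.1.erase a
          · rw [if_pos hc, hT1]
            simp [hane]
          · rw [if_neg hc]
        rw [hz, Matrix.rank_zero]
    refine (Finset.sum_le_sum fun J _ => hblk J).trans ?_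
    rw [Finset.sum_ite, Finset.sum_const, Finset.sum_const, smul_eq_mul, smul_eq_mul,
      mul_zero, add_zero]
    have hcard : (Finset.univ.filter
        fun J : {J : Finset (Fin k) // J.card = p₀ + 1 + 1} => i0 ∈ J.1).card
        = (k-1).choose (p₀+1) := by
      rw [← Fintype.card_subtype,
        Fintype.card_congr (ssEquiv (fun J : Finset (Fin k) => J.card = p₀ + 1 + 1)
          (fun J => i0 ∈ J)), card_flat_mem]
    rw [hcard]
  -- ## bound for the rank of `koszulM T2`
  have hA2 : contractT T2 x = 0 := by
    ext bb cc
    show (∑ i, x i * T2 i bb cc) = 0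
    have hterm : ∀ i : Fin k, x i * T2 i bb cc
        = x i * T i bb cc - (if i = i0 then x i * A bb cc else 0) := by
      intro i
      by_cases h : i = i0 <;> simp [hT2, hT1, h, mul_sub]
    rw [Finset.sum_congr rfl fun i _ => hterm i, Finset.sum_sub_distrib]
    have h1 : (∑ i : Fin k, if i = i0 then x i * A bb cc else 0) = A bb cc := by
      rw [Fintype.sum_ite_eq', hxi0, one_mul]
    have h2 : (∑ i : Fin k, x i * T i bb cc) = A bb cc := rfl
    rw [h1, h2, sub_self]
  have hcart : ctr F (p₀+1) n x * koszulM (p₀+1) T2 + koszulM p₀ T2 * ctr F p₀ m x = 0 := by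
    rw [cartan]
    ext Jc Ib
    show (if Jc.1 = Ib.1 then contractT T2 x Ib.2 Jc.2 else 0) = 0
    rw [hA2]
    by_cases h : Jc.1 = Ib.1 <;> simp [h]
  set S₁ : Submodule F ({I : Finset (Fin k) // I.card = p₀ + 1} × Fin m → F) :=
    LinearMap.ker (ctr F p₀ m x).mulVecLin with hS₁
  set S₂ := suppSub F
    (fun Ib : {I : Finset (Fin k) // I.card = p₀ + 1} × Fin m => i0 ∈ Ib.1.1) with hS₂
  have hdisj : S₁ ⊓ S₂ = ⊥ := by
    rw [Submodule.eq_bot_iff]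
    rintro u ⟨hu1, hu2⟩
    refine ctr_inj hxi0ne u hu2 ?_
    have := LinearMap.mem_ker.1 hu1
    rwa [Matrix.mulVecLin_apply] at this
  have hfrS₂ : Module.finrank F S₂ = (k-1).choose p₀ * m := by
    rw [hS₂, finrank_suppSub, card_P]
  have hfrS₁ : Module.finrank F S₁ + (ctr F p₀ m x).rank = k.choose (p₀+1) * m := by
    have h2 := LinearMap.finrank_range_add_finrank_ker (ctr F p₀ m x).mulVecLin
    rw [Module.finrank_pi, Fintype.card_prod, card_SS, Fintype.card_fin, ← hS₁] at h2
    rw [Matrix.rank]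
    omega
  have hrKle := rank_ctr_le (F := F) p₀ m hxi0ne hk0
  have hrKge := rank_ctr_ge (F := F) p₀ m hxi0ne
  have hk1 : k - 1 + 1 = k := Nat.succ_pred_eq_of_pos hk0
  have hpas1 : k.choose (p₀+1) * m = (k-1).choose p₀ * m + (k-1).choose (p₀+1) * m := by
    have hps : k.choose (p₀+1) = (k-1).choose p₀ + (k-1).choose (p₀+1) := by
      rw [← hk1]; exact Nat.choose_succ_succ (k-1) p₀
    rw [hps, add_mul]
  have hpas2 : k.choose (p₀+1+1) * n
      = (k-1).choose (p₀+1) * n + (k-1).choose (p₀+1+1) * n := by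
    have hps : k.choose (p₀+1+1) = (k-1).choose (p₀+1) + (k-1).choose (p₀+1+1) := by
      rw [← hk1]; exact Nat.choose_succ_succ (k-1) (p₀+1)
    rw [hps, add_mul]
  have hsup : S₁ ⊔ S₂ = ⊤ := by
    have hs := Submodule.finrank_sup_add_finrank_inf_eq S₁ S₂
    rw [hdisj, finrank_bot, add_zero] at hs
    refine Submodule.eq_top_of_finrank_eq ?_
    rw [hs, Module.finrank_pi, Fintype.card_prod, card_SS, Fintype.card_fin]
    omega
  have hmap1a : Module.finrank F (Submodule.map (koszulM (p₀+1) T2).mulVecLin S₁)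
      ≤ (k-1).choose (p₀+1) * m := by
    refine (Submodule.finrank_map_le _ _).trans ?_
    omega
  have hker2 : Submodule.map (koszulM (p₀+1) T2).mulVecLin S₁
      ≤ LinearMap.ker (ctr F (p₀+1) n x).mulVecLin := by
    rintro w ⟨u, hu, rfl⟩
    rw [LinearMap.mem_ker, Matrix.mulVecLin_apply, Matrix.mulVecLin_apply]
    have h0 : (ctr F (p₀+1) n x * koszulM (p₀+1) T2
        + koszulM p₀ T2 * ctr F p₀ m x).mulVec u = 0 := by
      rw [hcart, Matrix.zero_mulVec]
    rw [Matrix.add_mulVec, ← Matrix.mulVec_mulVec, ← Matrix.mulVec_mulVec] at h0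
    have hKu : (ctr F p₀ m x).mulVec u = 0 := by
      have := LinearMap.mem_ker.1 hu
      rwa [Matrix.mulVecLin_apply] at this
    rw [hKu, Matrix.mulVec_zero, add_zero] at h0
    exact h0
  have hmap1b : Module.finrank F (Submodule.map (koszulM (p₀+1) T2).mulVecLin S₁)
      ≤ (k-1).choose (p₀+1+1) * n := by
    refine (Submodule.finrank_mono hker2).trans ?_
    have h2 := LinearMap.finrank_range_add_finrank_ker (ctr F (p₀+1) n x).mulVecLin
    rw [Module.finrank_pi, Fintype.card_prod, card_SS, Fintype.card_fin] at h2
    have hge := rank_ctr_ge (F := F) (p₀+1) n hxi0ne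
    rw [Matrix.rank] at hge
    omega
  have hmap2a : Module.finrank F (Submodule.map (koszulM (p₀+1) T2).mulVecLin S₂)
      ≤ (k-1).choose p₀ * m :=
    (Submodule.finrank_map_le _ _).trans_eq hfrS₂
  have hsuppmap : Submodule.map (koszulM (p₀+1) T2).mulVecLin S₂
      ≤ suppSub F
        (fun Jc : {J : Finset (Fin k) // J.card = p₀ + 1 + 1} × Fin n => i0 ∈ Jc.1.1) := by
    rintro w ⟨u, hu, rfl⟩
    rw [mem_suppSub]
    intro Jc hJc
    rw [Matrix.mulVecLin_apply]
    show (∑ z, koszulM (p₀+1) T2 Jc z * u z) = 0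
    refine Finset.sum_eq_zero fun Ib _ => ?_
    by_cases hIb : i0 ∈ Ib.1.1
    · rw [koszulM_entry_zero (i0 := i0) _ T2 Jc Ib hIb hJc, zero_mul]
    · rw [hu Ib hIb, mul_zero]
  have hmap2b : Module.finrank F (Submodule.map (koszulM (p₀+1) T2).mulVecLin S₂)
      ≤ (k-1).choose (p₀+1) * n := by
    refine (Submodule.finrank_mono hsuppmap).trans ?_
    rw [finrank_suppSub, card_P]
  have hM2rank : (koszulM (p₀+1) T2).rank
      ≤ Module.finrank F (Submodule.map (koszulM (p₀+1) T2).mulVecLin S₁)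
        + Module.finrank F (Submodule.map (koszulM (p₀+1) T2).mulVecLin S₂) := by
    rw [Matrix.rank, ← Submodule.map_top, ← hsup, Submodule.map_sup]
    exact Submodule.finrank_add_le_finrank_add_finrank _ _
  have htot : (koszulM (p₀+1) T).rank
      ≤ (k-1).choose (p₀+1) * r
        + Module.finrank F (Submodule.map (koszulM (p₀+1) T2).mulVecLin S₁)
        + Module.finrank F (Submodule.map (koszulM (p₀+1) T2).mulVecLin S₂) := by
    rw [hsplit]
    have := matrix_rank_add_le (koszulM (p₀+1) T1) (koszulM (p₀+1) T2)
    omega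
  -- ## final arithmetic over ℚ
  set Y1 := Module.finrank F (Submodule.map (koszulM (p₀+1) T2).mulVecLin S₁) with hY1
  set Y2 := Module.finrank F (Submodule.map (koszulM (p₀+1) T2).mulVecLin S₂) with hY2
  set C : ℚ := ((k-1).choose (p₀+1) : ℚ) with hC
  have hsub1 : ((k - 1 - (p₀ + 1) : ℕ) : ℚ) = (k : ℚ) - (p₀ : ℚ) - 2 := by
    rw [Nat.cast_sub (by omega : p₀ + 1 ≤ k - 1), Nat.cast_sub (by omega : 1 ≤ k)]
    push_cast
    ring
  have hsub2 : ((k - 1 - p₀ : ℕ) : ℚ) = (k : ℚ) - (p₀ : ℚ) - 1 := by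
    rw [Nat.cast_sub (by omega : p₀ ≤ k - 1), Nat.cast_sub (by omega : 1 ≤ k)]
    push_cast
    ring
  have hq1 : ((k-1).choose (p₀+1+1) : ℚ) * ((p₀ : ℚ) + 2)
      = C * ((k : ℚ) - (p₀ : ℚ) - 2) := by
    have hnat := congrArg (fun t : ℕ => (t : ℚ)) (Nat.choose_succ_right_eq (k-1) (p₀+1))
    simp only [Nat.cast_mul] at hnat
    rw [hsub1] at hnat
    rw [hC]
    push_cast at hnat ⊢
    linarith [hnat]
  have hq2 : C * ((p₀ : ℚ) + 1) = ((k-1).choose p₀ : ℚ) * ((k : ℚ) - (p₀ : ℚ) - 1) := by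
    have hnat := congrArg (fun t : ℕ => (t : ℚ)) (Nat.choose_succ_right_eq (k-1) p₀)
    simp only [Nat.cast_mul] at hnat
    rw [hsub2] at hnat
    rw [hC]
    push_cast at hnat ⊢
    linarith [hnat]
  have hkp : ((p₀ : ℚ) + 1) < (k : ℚ) := by exact_mod_cast hpk
  have hbound1 : (Y1 : ℚ) ≤ C * min (m : ℚ)
      (((k : ℚ) - ((p₀+1 : ℕ) : ℚ) - 1) * n / (((p₀+1 : ℕ) : ℚ) + 1)) := by
    rcases le_total (m : ℚ) (((k : ℚ) - ((p₀+1 : ℕ) : ℚ) - 1) * n / (((p₀+1 : ℕ) : ℚ) + 1))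
      with h | h
    · rw [min_eq_left h]
      calc (Y1 : ℚ) ≤ (((k-1).choose (p₀+1) * m : ℕ) : ℚ) := by exact_mod_cast hmap1a
        _ = C * m := by rw [hC]; push_cast; ring
    · rw [min_eq_right h]
      calc (Y1 : ℚ) ≤ (((k-1).choose (p₀+1+1) * n : ℕ) : ℚ) := by exact_mod_cast hmap1b
        _ = C * (((k : ℚ) - ((p₀+1 : ℕ) : ℚ) - 1) * n / (((p₀+1 : ℕ) : ℚ) + 1)) := by
            have hden : ((p₀ : ℚ) + 1 + 1) ≠ 0 := by positivity
            push_cast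
            field_simp
            linear_combination (n : ℚ) * hq1
  have hbound2 : (Y2 : ℚ) ≤ C * min (n : ℚ)
      (((p₀+1 : ℕ) : ℚ) * m / ((k : ℚ) - ((p₀+1 : ℕ) : ℚ))) := by
    rcases le_total (n : ℚ) ((((p₀+1 : ℕ)) : ℚ) * m / ((k : ℚ) - ((p₀+1 : ℕ) : ℚ)))
      with h | h
    · rw [min_eq_left h]
      calc (Y2 : ℚ) ≤ (((k-1).choose (p₀+1) * n : ℕ) : ℚ) := by exact_mod_cast hmap2b
        _ = C * n := by rw [hC]; push_cast; ring
    · rw [min_eq_right h]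
      calc (Y2 : ℚ) ≤ (((k-1).choose p₀ * m : ℕ) : ℚ) := by exact_mod_cast hmap2a
        _ = C * (((p₀+1 : ℕ) : ℚ) * m / ((k : ℚ) - ((p₀+1 : ℕ) : ℚ))) := by
            have hden : ((k : ℚ) - ((p₀ : ℚ) + 1)) ≠ 0 := by
              have hlt : ((p₀ : ℚ) + 1) < (k : ℚ) := by exact_mod_cast hpk
              linarith
            push_cast
            field_simp
            linear_combination (-(m : ℚ)) * hq2
  have hcast : ((koszulM (p₀+1) T).rank : ℚ) ≤ C * r + (Y1 : ℚ) + (Y2 : ℚ) := by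
    have := (Nat.cast_le (α := ℚ)).2 htot
    push_cast at this
    rw [hC]
    push_cast
    linarith
  calc ((koszulM (p₀+1) T).rank : ℚ) ≤ C * r + (Y1 : ℚ) + (Y2 : ℚ) := hcast
    _ ≤ C * r + C * min (m : ℚ)
          (((k : ℚ) - ((p₀+1 : ℕ) : ℚ) - 1) * n / (((p₀+1 : ℕ) : ℚ) + 1))
        + C * min (n : ℚ) (((p₀+1 : ℕ) : ℚ) * m / ((k : ℚ) - ((p₀+1 : ℕ) : ℚ))) := by
        linarith [hbound1, hbound2]
    _ = C * ((r : ℚ) + min (m : ℚ)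
          (((k : ℚ) - ((p₀+1 : ℕ) : ℚ) - 1) * n / (((p₀+1 : ℕ) : ℚ) + 1))
        + min (n : ℚ) (((p₀+1 : ℕ) : ℚ) * m / ((k : ℚ) - ((p₀+1 : ℕ) : ℚ)))) := by ring
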